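/- arXiv:0712.0964 — 2 statements merged into one kernel-verified Lean document; each statement's English description precedes it below -/
import Mathlib

section
/- Let c > 0. Then, as r → ∞, log( Σ_{k=0}^∞ (c^k / k!) e^{−c} e^{−r/(k+1)} ) / √(2 r log r) → −1; that is, log( Σ_{k=0}^∞ (c^k / k!) e^{−c} e^{−r/(k+1)} ) ∼ −√(2 r log r). -/
open MeasureTheory Filter
open scoped ENNReal NNReal Topology Classical

noncomputable section

namespace JumpCoding

universe u v w

/-- The quantization error of `X` with distortion `d`, moment `s`, rate `r`,
with codebooks constrained to lie in the set `S`. -/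
def quantErrorIn {Ω F : Type*} [MeasurableSpace Ω] (P : Measure Ω) (X : Ω → F)
    (S : Set F) (d : F → F → ℝ) (s r : ℝ) : ℝ :=
  sInf { e : ℝ | ∃ (C : Finset F) (hC : C.Nonempty), ↑C ⊆ S ∧
    Real.log C.card ≤ r ∧
    e = (∫ ω, (C.inf' hC fun a => d (X ω) a) ^ s ∂P) ^ (1 / s) }

/-- The (unconstrained) quantization error `D^{(q)}(r | X, d, s)`. -/
def quantError {Ω F : Type*} [MeasurableSpace Ω] (P : Measure Ω) (X : Ω → F)
    (d : F → F → ℝ) (s r : ℝ) : ℝ :=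
  quantErrorIn P X Set.univ d s r

/-- The set of admissible numbers of codepoints for the quantization number
`d^{(q)}(ε | X, d, s)`. -/
def quantNumSet {Ω F : Type*} [MeasurableSpace Ω] (P : Measure Ω) (X : Ω → F)
    (d : F → F → ℝ) (s ε : ℝ) : Set ℕ :=
  { n : ℕ | 1 ≤ n ∧ quantError P X d s (Real.log n) ≤ ε }

/-- The quantization number `d^{(q)}(ε | X, d, s)` (junk value `0` if the defining
set is empty, i.e. if `d^{(q)} = ∞`). -/
def quantNum {Ω F : Type*} [MeasurableSpace Ω] (P : Measure Ω) (X : Ω → F)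
    (d : F → F → ℝ) (s ε : ℝ) : ℕ :=
  sInf (quantNumSet P X d s ε)

/-- The discrete entropy of a random variable. -/
def discreteEntropy {Ω F : Type*} [MeasurableSpace Ω] (P : Measure Ω)
    (Xh : Ω → F) : ℝ :=
  ∑' x : F, Real.negMulLog (P (Xh ⁻¹' {x})).toReal

/-- The entropy coding error of `X`, with reconstructions constrained to take
values in the set `S`. -/
def entropyErrorIn {Ω F : Type*} [MeasurableSpace Ω] (P : Measure Ω) (X : Ω → F)
    (S : Set F) (d : F → F → ℝ) (s r : ℝ) : ℝ :=
  sInf { e : ℝ | ∃ Xh : Ω → F, (Set.range Xh).Countable ∧ (∀ ω, Xh ω ∈ S) ∧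
    discreteEntropy P Xh ≤ r ∧
    e = (∫ ω, d (X ω) (Xh ω) ^ s ∂P) ^ (1 / s) }

/-- The (unconstrained) entropy coding error `D^{(e)}(r | X, d, s)`. -/
def entropyError {Ω F : Type*} [MeasurableSpace Ω] (P : Measure Ω) (X : Ω → F)
    (d : F → F → ℝ) (s r : ℝ) : ℝ :=
  entropyErrorIn P X Set.univ d s r

/-- The set of sizes of `ε`-nets of `(E, ρ)`. -/
def coveringSet (E : Type*) (ρ : E → E → ℝ) (ε : ℝ) : Set ℕ :=
  { n : ℕ | ∃ x : Fin n → E, ∀ y : E, ∃ i, ρ y (x i) ≤ ε }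

/-- The covering number `N(E, ρ, ε)` (junk value `0` if no finite `ε`-net exists). -/
def coveringNum (E : Type*) (ρ : E → E → ℝ) (ε : ℝ) : ℕ :=
  sInf (coveringSet E ρ ε)

/-- `ρ` is a distortion measure: measurable, symmetric, nonnegative and
vanishing exactly on the diagonal. -/
def IsDistortion {E : Type*} [MeasurableSpace E] (ρ : E → E → ℝ) : Prop :=
  Measurable (fun p : E × E => ρ p.1 p.2) ∧ (∀ x y, ρ x y = ρ y x) ∧
    (∀ x y, 0 ≤ ρ x y) ∧ (∀ x y, ρ x y = 0 ↔ x = y)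

/-- The path distortion `ρ_D(f, g) = ∫_0^1 ρ(f(t), g(t)) dt`. -/
def pathDist {E : Type*} (ρ : E → E → ℝ) (f g : ℝ → E) : ℝ :=
  ∫ t in Set.Ioo (0 : ℝ) 1, ρ (f t) (g t)

/-- The piecewise constant path on `[0,1)` with jump positions `Y ω 1 < Y ω 2 < …`
(`Y ω 0 = 0`), number of jumps `N ω` and values `A ω i` on `[Y ω i, Y ω (i+1))`. -/
def jumpPath {Ω E : Type*} (N : Ω → ℕ) (Y : Ω → ℕ → ℝ) (A : Ω → ℕ → E)
    (ω : Ω) (t : ℝ) : E :=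
  A ω (Nat.findGreatest (fun i => Y ω i ≤ t) (N ω))

/-- The data `(N, Y)` describes valid jump positions `0 = Y_0 < Y_1 < … < Y_N < 1`. -/
def ValidJumps {Ω : Type*} (N : Ω → ℕ) (Y : Ω → ℕ → ℝ) : Prop :=
  ∀ ω, Y ω 0 = 0 ∧ (∀ i, i < N ω → Y ω i < Y ω (i + 1)) ∧ Y ω (N ω) < 1

/-- `f : ℝ → E` is (on `[0,1)`) a piecewise constant function with finitely many
jumps, right-continuous at jumps. -/
def IsJumpFun {E : Type*} (f : ℝ → E) : Prop :=
  ∃ (n : ℕ) (y : ℕ → ℝ) (a : ℕ → E), y 0 = 0 ∧ (∀ i, i < n → y i < y (i + 1)) ∧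
    y n < 1 ∧ ∀ t, f t = a (Nat.findGreatest (fun i => y i ≤ t) n)

/-- The path space `D([0,1), E)`. -/
def JumpFuns (E : Type*) : Set (ℝ → E) := { f | IsJumpFun f }

/-- The jump-count condition: `P(N = k) ≤ (λ^k/k!) e^{-λ} K`. -/
def JumpCountBound {Ω : Type*} [MeasurableSpace Ω] (P : Measure Ω) (N : Ω → ℕ)
    (lam K : ℝ) : Prop :=
  ∀ k : ℕ, (P {ω | N ω = k}).toReal ≤ lam ^ k / (Nat.factorial k) * Real.exp (-lam) * K

/-- The open ordered simplex `0 < y_1 < … < y_k < 1`. -/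
def simplex (k : ℕ) : Set (Fin k → ℝ) :=
  { y | (∀ i, y i ∈ Set.Ioo (0 : ℝ) 1) ∧ ∀ i j, i < j → y i < y j }

/-- The jump positions form a Poisson point process of intensity `lam` on `[0,1)`:
`N` is Poisson(`lam`) and, given `N = k`, the jump positions are distributed as the
order statistics of `k` i.i.d. uniforms, i.e. with density `k!` on the simplex. -/
def PoissonJumps {Ω : Type*} [MeasurableSpace Ω] (P : Measure Ω) (N : Ω → ℕ)
    (Y : Ω → ℕ → ℝ) (lam : ℝ) : Prop :=
  ∀ (k : ℕ) (B : Set (Fin k → ℝ)), MeasurableSet B →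
    (P {ω | N ω = k ∧ (fun i : Fin k => Y ω (i.1 + 1)) ∈ B}).toReal
      = Real.exp (-lam) * lam ^ k * (volume (B ∩ simplex k)).toReal

/-- Condition (*): given `N = k`, the jump positions `(Y_1, …, Y_k)` are independent
of the jump destinations `(X(Y_0), …, X(Y_k)) = (A_0, …, A_k)`. -/
def IndepJumps {Ω E : Type*} [MeasurableSpace Ω] [MeasurableSpace E] (P : Measure Ω)
    (N : Ω → ℕ) (Y : Ω → ℕ → ℝ) (A : Ω → ℕ → E) : Prop :=
  ∀ (k : ℕ) (B : Set (Fin k → ℝ)) (G : Set (Fin (k + 1) → E)),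
    MeasurableSet B → MeasurableSet G →
    (P {ω | N ω = k ∧ (fun i : Fin k => Y ω (i.1 + 1)) ∈ B ∧
          (fun i : Fin (k + 1) => A ω i.1) ∈ G}).toReal
        * (P {ω | N ω = k}).toReal
      = (P {ω | N ω = k ∧ (fun i : Fin k => Y ω (i.1 + 1)) ∈ B}).toReal
        * (P {ω | N ω = k ∧ (fun i : Fin (k + 1) => A ω i.1) ∈ G}).toReal


section Statement16Aux

private lemma aux_pow_self_le : ∀ k : ℕ, (k : ℝ) ^ k ≤ (Nat.factorial k : ℝ) * Real.exp k := by
  intro k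
  induction k with
  | zero => simp
  | succ n ih =>
    have hn0 : (0:ℝ) ≤ n := Nat.cast_nonneg n
    have hexp : ((n:ℝ) + 1) ^ n ≤ (n:ℝ) ^ n * Real.exp 1 := by
      rcases Nat.eq_zero_or_pos n with h | h
      · subst h
        simpa using Real.one_le_exp (by norm_num : (0:ℝ) ≤ 1)
      · have hn : (0:ℝ) < n := by exact_mod_cast h
        have h1 : ((n:ℝ) + 1) ≤ (n:ℝ) * Real.exp (1 / n) := by
          have h2 := Real.add_one_le_exp (1 / (n:ℝ))
          have h3 := mul_le_mul_of_nonneg_left h2 hn.le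
          calc (n:ℝ) + 1 = (n:ℝ) * (1/(n:ℝ) + 1) := by field_simp; ring
            _ ≤ (n:ℝ) * Real.exp (1/(n:ℝ)) := h3
        calc ((n:ℝ) + 1) ^ n ≤ ((n:ℝ) * Real.exp (1 / n)) ^ n :=
              pow_le_pow_left₀ (by positivity) h1 n
          _ = (n:ℝ) ^ n * Real.exp (1 / n) ^ n := mul_pow _ _ _
          _ = (n:ℝ) ^ n * Real.exp 1 := by
              rw [← Real.exp_nat_mul]
              congr 1
              field_simp
    have hfac : (Nat.factorial (n+1) : ℝ) = ((n:ℝ) + 1) * (Nat.factorial n : ℝ) := by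
      rw [Nat.factorial_succ]
      push_cast
      ring
    have hfac0 : (0:ℝ) < (Nat.factorial n : ℝ) := by
      exact_mod_cast Nat.factorial_pos n
    have hcast : ((n+1 : ℕ) : ℝ) = (n:ℝ) + 1 := by push_cast; ring
    rw [hcast, hfac]
    calc ((n:ℝ) + 1) ^ (n + 1) = ((n:ℝ) + 1) ^ n * ((n:ℝ) + 1) := by ring
      _ ≤ ((n:ℝ) ^ n * Real.exp 1) * ((n:ℝ) + 1) :=
          mul_le_mul_of_nonneg_right hexp (by positivity)
      _ ≤ (((Nat.factorial n : ℝ) * Real.exp n) * Real.exp 1) * ((n:ℝ) + 1) := by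
          have := mul_le_mul_of_nonneg_right ih (Real.exp_pos 1).le
          nlinarith [Real.exp_pos (1:ℝ)]
      _ = ((n:ℝ) + 1) * (Nat.factorial n : ℝ) * Real.exp ((n:ℝ) + 1) := by
          rw [Real.exp_add]; ring

private lemma aux_log_fac_lb (k : ℕ) :
    (k:ℝ) * Real.log k - k ≤ Real.log (Nat.factorial k) := by
  rcases Nat.eq_zero_or_pos k with h | h
  · subst h; simp
  · have hk : (0:ℝ) < k := by exact_mod_cast h
    have hfac0 : (0:ℝ) < (Nat.factorial k : ℝ) := by exact_mod_cast Nat.factorial_pos k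
    have h1 := Real.log_le_log (x := (k:ℝ)^k) (by positivity) (aux_pow_self_le k)
    rw [Real.log_pow, Real.log_mul (ne_of_gt hfac0) (Real.exp_ne_zero _), Real.log_exp] at h1
    linarith

private lemma aux_log_fac_ub (k : ℕ) :
    Real.log (Nat.factorial k) ≤ (k:ℝ) * Real.log k := by
  rcases Nat.eq_zero_or_pos k with h | h
  · subst h; simp
  · have hfac0 : (0:ℝ) < (Nat.factorial k : ℝ) := by exact_mod_cast Nat.factorial_pos k
    have h1 : ((Nat.factorial k : ℕ) : ℝ) ≤ (k:ℝ)^k := by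
      exact_mod_cast Nat.factorial_le_pow k
    have := Real.log_le_log hfac0 h1
    rwa [Real.log_pow] at this

private lemma aux_amgm {a b : ℝ} (ha : 0 ≤ a) (hb : 0 ≤ b) :
    2 * Real.sqrt (a * b) ≤ a + b := by
  rw [Real.sqrt_mul ha]
  nlinarith [sq_nonneg (Real.sqrt a - Real.sqrt b), Real.sq_sqrt ha, Real.sq_sqrt hb,
    Real.sqrt_nonneg a, Real.sqrt_nonneg b]

private lemma aux_ev_log_le {δ : ℝ} (hδ : 0 < δ) :
    ∀ᶠ r : ℝ in atTop, Real.log r ≤ δ * Real.sqrt (2 * r * Real.log r) := by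
  filter_upwards [eventually_ge_atTop (3:ℝ),
    Real.isLittleO_log_id_atTop.def (show (0:ℝ) < δ^2/2 by positivity)] with r hr3 hlo
  have hr0 : (0:ℝ) < r := by linarith
  have hlr : 1 ≤ Real.log r := by
    rw [Real.le_log_iff_exp_le hr0]
    linarith [Real.exp_one_lt_d9]
  simp only [Real.norm_eq_abs, id_eq] at hlo
  rw [abs_of_nonneg (by linarith : (0:ℝ) ≤ Real.log r), abs_of_nonneg hr0.le] at hlo
  have h6 : (Real.log r)^2 ≤ δ^2 * (2 * r * Real.log r) := by
    nlinarith [mul_le_mul_of_nonneg_right hlo (by linarith : (0:ℝ) ≤ Real.log r)]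
  have h7 : Real.log r ≤ Real.sqrt (δ^2 * (2 * r * Real.log r)) :=
    (Real.le_sqrt (by linarith) (by nlinarith)).mpr h6
  rwa [Real.sqrt_mul (sq_nonneg δ), Real.sqrt_sq hδ.le] at h7

private lemma aux_ev_loglog {δ : ℝ} (hδ : 0 < δ) :
    ∀ᶠ r : ℝ in atTop, Real.log (2 * Real.log r) ≤ δ * Real.log r := by
  have h : ∀ᶠ x : ℝ in atTop, Real.log (2 * x) ≤ δ * x := by
    filter_upwards [eventually_ge_atTop (1:ℝ), eventually_ge_atTop (2*Real.log 2/δ),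
      Real.isLittleO_log_id_atTop.def (show (0:ℝ) < δ/2 by positivity)] with x h1 h2 hlo
    have hx : (0:ℝ) < x := by linarith
    have hmul : Real.log (2*x) = Real.log 2 + Real.log x :=
      Real.log_mul (by norm_num) (ne_of_gt hx)
    simp only [Real.norm_eq_abs, id_eq] at hlo
    rw [abs_of_nonneg (Real.log_nonneg h1), abs_of_nonneg hx.le] at hlo
    have hl2 : Real.log 2 ≤ δ/2 * x := by
      have h4 : δ/2 * (2*Real.log 2/δ) ≤ δ/2 * x := mul_le_mul_of_nonneg_left h2 (by positivity)
      have h5 : δ/2 * (2*Real.log 2/δ) = Real.log 2 := by field_simp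
      linarith
    linarith
  exact Real.tendsto_log_atTop.eventually h

set_option maxHeartbeats 1000000 in
private lemma aux_key {C ε : ℝ} (hC : 0 ≤ C) (hε : 0 < ε) (hε1 : ε ≤ 1) :
    ∀ᶠ r : ℝ in atTop, ∀ k : ℕ,
      (1 - ε) * Real.sqrt (2 * r * Real.log r) + C * k
        ≤ (k:ℝ) * Real.log k + r / ((k:ℝ) + 1) := by
  filter_upwards [eventually_ge_atTop (3:ℝ),
    Real.tendsto_log_atTop.eventually_ge_atTop
      (max 1 (max (C/(2*ε)) ((4*Real.log 2 + 4*C)/ε))),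
    Real.isLittleO_log_id_atTop.def (show (0:ℝ) < 1/8 by norm_num),
    aux_ev_loglog (show (0:ℝ) < ε/8 by positivity),
    aux_ev_log_le (show (0:ℝ) < ε/4 by positivity)] with r h1 h2 h3 h4 h5 k
  have hr0 : (0:ℝ) < r := by linarith
  set lr := Real.log r with hlrdef
  have hlr1 : 1 ≤ lr := le_trans (le_max_left _ _) h2
  have hlr0 : 0 < lr := by linarith
  have hr8 : lr ≤ 1/8 * r := by
    simp only [Real.norm_eq_abs, id_eq] at h3
    rwa [abs_of_nonneg hlr0.le, abs_of_nonneg hr0.le] at h3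
  clear_value lr
  have h2rlr : (0:ℝ) < 2 * r * lr := by positivity
  have hlrne : lr ≠ 0 := ne_of_gt hlr0
  set φ := Real.sqrt (2 * r * lr) with hφdef
  have hφsq : φ * φ = 2 * r * lr := Real.mul_self_sqrt h2rlr.le
  have hφ0 : 0 < φ := Real.sqrt_pos.mpr h2rlr
  have hφ4lr : 4 * lr ≤ φ := by
    rw [hφdef]
    exact (Real.le_sqrt (by linarith) h2rlr.le).mpr (by nlinarith)
  have hlogφ : lr/2 ≤ Real.log φ := by
    rw [hφdef, Real.log_sqrt h2rlr.le]
    have h8 : r ≤ 2*r*lr := by nlinarith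
    have h9 := Real.log_le_log hr0 h8
    rw [← hlrdef] at h9
    linarith
  clear_value φ
  clear hφdef
  have hk1 : (0:ℝ) < (k:ℝ) + 1 := by positivity
  by_cases hcase : (k:ℝ) + 1 ≤ φ / (2 * lr)
  · -- few jumps: r/(k+1) alone is at least φ
    have hklogk : 0 ≤ (k:ℝ) * Real.log k := by
      rcases Nat.eq_zero_or_pos k with h | h
      · subst h; simp
      · have : (1:ℝ) ≤ k := by exact_mod_cast h
        exact mul_nonneg (by positivity) (Real.log_nonneg this)
    have hdiv : φ ≤ r / ((k:ℝ)+1) := by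
      rw [le_div_iff₀ hk1]
      calc φ * ((k:ℝ)+1) ≤ φ * (φ/(2*lr)) := mul_le_mul_of_nonneg_left hcase hφ0.le
        _ = (φ*φ)/(2*lr) := by ring
        _ = r := by rw [hφsq]; field_simp
    have hCk : C * k ≤ ε * φ := by
      have hC2 : C ≤ 2*ε*lr := by
        have h6 : C/(2*ε) ≤ lr := le_trans (le_trans (le_max_left _ _) (le_max_right 1 _)) h2
        have := (div_le_iff₀ (show (0:ℝ) < 2*ε by positivity)).mp h6
        linarith
      calc C * k ≤ C * ((k:ℝ)+1) := by nlinarith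
        _ ≤ (2*ε*lr) * (φ/(2*lr)) :=
            mul_le_mul hC2 hcase (by positivity) (by positivity)
        _ = ε * φ := by field_simp
    linarith [hdiv, hCk, hklogk, hφ0.le]
  · -- many jumps: use k log k ≥ k · L and AM-GM
    push_neg at hcase
    have hm2 : 2 ≤ φ/(2*lr) := by
      rw [le_div_iff₀ (by positivity)]
      linarith
    have hq : φ/(2*lr) = 2*(φ/(4*lr)) := by ring
    have h7 : 1 ≤ φ/(4*lr) := by linarith
    have hkhalf : φ/(4*lr) ≤ (k:ℝ) := by linarith
    have hk1' : (1:ℝ) ≤ (k:ℝ) := by linarith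
    set L := lr/2 - Real.log (2*lr) - Real.log 2 with hLdef
    clear_value L
    have hlogk : L ≤ Real.log k := by
      have h0 : (0:ℝ) < φ/(4*lr) := by positivity
      have h9 := Real.log_le_log h0 hkhalf
      have hlog4 : Real.log (φ/(4*lr)) = Real.log φ - Real.log (2*lr) - Real.log 2 := by
        rw [show (4:ℝ)*lr = 2*(2*lr) by ring,
          Real.log_div (ne_of_gt hφ0) (by positivity),
          Real.log_mul (by norm_num) (by positivity)]
        ring
      rw [hlog4] at h9
      simp only [hLdef]
      linarith
    have hconst : 4*Real.log 2 + 4*C ≤ ε * lr := by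
      have h10 : (4*Real.log 2 + 4*C)/ε ≤ lr :=
        le_trans (le_trans (le_max_right _ _) (le_max_right 1 _)) h2
      have := (div_le_iff₀ hε).mp h10
      linarith
    have hLC1 : (1 - 3*ε/4) * lr / 2 ≤ L - C := by
      simp only [hLdef]
      have hl2 : Real.log (2*lr) ≤ ε/8 * lr := h4
      linarith
    have hLC0 : 0 ≤ L - C := by
      linarith [hLC1, mul_pos (show (0:ℝ) < 1 - 3*ε/4 by linarith) hlr0]
    have hmain : 2 * Real.sqrt ((L - C) * r) ≤ ((k:ℝ)+1) * (L - C) + r/((k:ℝ)+1) := by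
      have h11 := aux_amgm (a := ((k:ℝ)+1)*(L-C)) (b := r/((k:ℝ)+1))
        (mul_nonneg hk1.le hLC0) (div_nonneg hr0.le hk1.le)
      have heq : ((k:ℝ)+1)*(L-C) * (r/((k:ℝ)+1)) = (L-C)*r := by
        field_simp
      rwa [heq] at h11
    have hsq : (1 - 3*ε/4) * φ ≤ 2 * Real.sqrt ((L-C)*r) := by
      have h34 : (0:ℝ) ≤ 1 - 3*ε/4 := by linarith
      have hs : Real.sqrt ((L-C)*r) * Real.sqrt ((L-C)*r) = (L-C)*r :=
        Real.mul_self_sqrt (mul_nonneg hLC0 hr0.le)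
      have e1 : ((1-3*ε/4)*φ)*((1-3*ε/4)*φ) = ((1-3*ε/4)*(1-3*ε/4))*(φ*φ) := by ring
      rw [hφsq] at e1
      have e2 : (2*Real.sqrt ((L-C)*r))*(2*Real.sqrt ((L-C)*r))
          = 4*(Real.sqrt ((L-C)*r)*Real.sqrt ((L-C)*r)) := by ring
      rw [hs] at e2
      have h12 : ((1-3*ε/4)*(1-3*ε/4))*(2*r*lr) ≤ (1-3*ε/4)*(2*r*lr) :=
        mul_le_mul_of_nonneg_right (by nlinarith : (1-3*ε/4)*(1-3*ε/4) ≤ 1-3*ε/4) h2rlr.le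
      have h13 := mul_le_mul_of_nonneg_right hLC1 hr0.le
      have hle : ((1-3*ε/4)*φ) * ((1-3*ε/4)*φ)
          ≤ (2*Real.sqrt ((L-C)*r)) * (2*Real.sqrt ((L-C)*r)) := by
        rw [e1, e2]
        linarith [h12, h13]
      nlinarith [Real.sqrt_nonneg ((L-C)*r), hφ0.le, h34, hle]
    have hLφ : L - C ≤ ε/4 * φ := by
      have h13 : lr ≤ ε/4 * φ := h5
      have h14 : L ≤ lr/2 := by
        simp only [hLdef]
        have := Real.log_nonneg (show (1:ℝ) ≤ 2*lr by linarith)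
        have := Real.log_nonneg (show (1:ℝ) ≤ 2 by norm_num)
        linarith
      linarith
    have hklogk : (k:ℝ) * L ≤ (k:ℝ) * Real.log k :=
      mul_le_mul_of_nonneg_left hlogk (by positivity)
    have hfinal : (k:ℝ)*L - C*k + r/((k:ℝ)+1)
        = ((k:ℝ)+1)*(L-C) + r/((k:ℝ)+1) - (L-C) := by ring
    linarith [hmain, hsq, hLφ, hklogk, hfinal]

end Statement16Aux
section Statement16Main

variable {c : ℝ}

private lemma aux_term_eq (hc : 0 < c) (r : ℝ) (k : ℕ) :
    c ^ k / (Nat.factorial k) * Real.exp (-c) * Real.exp (-r / ((k:ℝ) + 1))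
      = Real.exp ((k:ℝ) * Real.log c - Real.log (Nat.factorial k) - c - r / ((k:ℝ)+1)) := by
  have hfac0 : (0:ℝ) < (Nat.factorial k : ℝ) := by exact_mod_cast Nat.factorial_pos k
  rw [neg_div, show (k:ℝ) * Real.log c - Real.log (Nat.factorial k) - c - r/((k:ℝ)+1)
      = ((k:ℝ) * Real.log c) + (-Real.log (Nat.factorial k)) + (-c) + (-(r/((k:ℝ)+1))) from by
        ring,
    Real.exp_add, Real.exp_add, Real.exp_add, Real.exp_neg, Real.exp_neg, Real.exp_neg,
    Real.exp_nat_mul, Real.exp_log hc, Real.exp_log hfac0]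
  ring

private lemma aux_summable (hc : 0 < c) {r : ℝ} (hr : 0 ≤ r) :
    Summable (fun k : ℕ => c ^ k / (Nat.factorial k) * Real.exp (-c)
      * Real.exp (-r / ((k:ℝ) + 1))) := by
  apply Summable.of_nonneg_of_le (fun k => by positivity) (fun k => ?_)
    ((Real.summable_pow_div_factorial c).mul_right (Real.exp (-c)))
  have h1 : Real.exp (-r/((k:ℝ)+1)) ≤ 1 := by
    rw [Real.exp_le_one_iff]
    apply div_nonpos_of_nonpos_of_nonneg (by linarith) (by positivity)
  have h2 : (0:ℝ) ≤ c ^ k / (Nat.factorial k) * Real.exp (-c) := by positivity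
  calc c ^ k / (Nat.factorial k) * Real.exp (-c) * Real.exp (-r / ((k:ℝ)+1))
      ≤ c ^ k / (Nat.factorial k) * Real.exp (-c) * 1 :=
        mul_le_mul_of_nonneg_left h1 h2
    _ = c ^ k / (Nat.factorial k) * Real.exp (-c) := mul_one _

private lemma aux_S_pos (hc : 0 < c) {r : ℝ} (hr : 0 ≤ r) :
    0 < ∑' k : ℕ, c ^ k / (Nat.factorial k) * Real.exp (-c)
      * Real.exp (-r / ((k:ℝ) + 1)) :=
  Summable.tsum_pos (aux_summable hc hr) (fun k => by positivity) 0 (by positivity)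

set_option maxHeartbeats 1000000 in
private lemma aux_upper (hc : 0 < c) {ε : ℝ} (hε : 0 < ε) (hε1 : ε ≤ 1) :
    ∀ᶠ r : ℝ in atTop,
      Real.log (∑' k : ℕ, c ^ k / (Nat.factorial k) * Real.exp (-c)
          * Real.exp (-r / ((k : ℝ) + 1)))
        ≤ -(1-ε) * Real.sqrt (2*r*Real.log r) := by
  set C := |Real.log c| + Real.log 2 + 1 with hCdef
  have hlog2 : (0:ℝ) < Real.log 2 := Real.log_pos (by norm_num)
  have hC : 0 ≤ C := by positivity
  filter_upwards [aux_key hC (half_pos hε) (by linarith), aux_ev_log_le (half_pos hε),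
    eventually_ge_atTop (3:ℝ)] with r hkey hev hr3
  have hr0 : (0:ℝ) ≤ r := by linarith
  set φ := Real.sqrt (2*r*Real.log r) with hφdef
  have hφ0 : 0 ≤ φ := Real.sqrt_nonneg _
  clear_value φ
  have hterm : ∀ k : ℕ, c ^ k / (Nat.factorial k) * Real.exp (-c) * Real.exp (-r / ((k:ℝ)+1))
      ≤ (1/2:ℝ)^k * Real.exp (-((1-ε/2)*φ)) := by
    intro k
    rw [aux_term_eq hc r k]
    have hhalf : ((1:ℝ)/2) = Real.exp (-Real.log 2) := by
      rw [Real.exp_neg, Real.exp_log (by norm_num : (0:ℝ) < 2)]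
      norm_num
    rw [hhalf, ← Real.exp_nat_mul, ← Real.exp_add, Real.exp_le_exp]
    have hfac := aux_log_fac_lb k
    have hk := hkey k
    have habs : (k:ℝ) * Real.log c ≤ (k:ℝ) * |Real.log c| :=
      mul_le_mul_of_nonneg_left (le_abs_self _) (Nat.cast_nonneg k)
    have hk0 : (0:ℝ) ≤ (k:ℝ) := Nat.cast_nonneg k
    simp only [hCdef] at hk
    nlinarith [hc, hk, hfac, habs, hk0]
  have hsum2 : Summable (fun k : ℕ => ((1:ℝ)/2)^k * Real.exp (-((1-ε/2)*φ))) :=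
    (summable_geometric_of_lt_one (by norm_num) (by norm_num)).mul_right _
  have hS : (∑' k : ℕ, c ^ k / (Nat.factorial k) * Real.exp (-c)
      * Real.exp (-r / ((k:ℝ)+1))) ≤ 2 * Real.exp (-((1-ε/2)*φ)) := by
    calc (∑' k : ℕ, c ^ k / (Nat.factorial k) * Real.exp (-c) * Real.exp (-r / ((k:ℝ)+1)))
        ≤ ∑' k : ℕ, ((1:ℝ)/2)^k * Real.exp (-((1-ε/2)*φ)) :=
          Summable.tsum_le_tsum hterm (aux_summable hc hr0) hsum2
      _ = 2 * Real.exp (-((1-ε/2)*φ)) := by rw [tsum_mul_right, tsum_geometric_two]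
  have hlog := Real.log_le_log (aux_S_pos hc hr0) hS
  rw [Real.log_mul (by norm_num) (Real.exp_ne_zero _), Real.log_exp] at hlog
  have hlog2φ : Real.log 2 ≤ ε/2 * φ := by
    have h1 : Real.log 2 ≤ Real.log r := Real.log_le_log (by norm_num) (by linarith)
    linarith [hev]
  linarith

set_option maxHeartbeats 1000000 in
private lemma aux_lower (hc : 0 < c) {ε : ℝ} (hε : 0 < ε) (hε1 : ε ≤ 1) :
    ∀ᶠ r : ℝ in atTop,
      -(1+ε) * Real.sqrt (2*r*Real.log r)
        ≤ Real.log (∑' k : ℕ, c ^ k / (Nat.factorial k) * Real.exp (-c)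
            * Real.exp (-r / ((k:ℝ)+1))) := by
  filter_upwards [eventually_ge_atTop (max 3 ((2*c/ε)^2)),
    Real.tendsto_log_atTop.eventually_ge_atTop (max 2 (2*|Real.log c|/ε)),
    aux_ev_log_le one_pos] with r hr3 hlr2 hev1
  have hr3' : (3:ℝ) ≤ r := le_trans (le_max_left _ _) hr3
  have hr0 : (0:ℝ) < r := by linarith
  set lr := Real.log r with hlrdef
  have hlr2' : 2 ≤ lr := le_trans (le_max_left _ _) hlr2
  have hlr0 : 0 < lr := by linarith
  have hlrne : lr ≠ 0 := ne_of_gt hlr0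
  have hsr : Real.sqrt r * Real.sqrt r = r := Real.mul_self_sqrt hr0.le
  have hsr0 : 0 ≤ Real.sqrt r := Real.sqrt_nonneg r
  have hlogsqrt : Real.log (Real.sqrt r) = lr/2 := Real.log_sqrt hr0.le
  clear_value lr
  have h2rlr : (0:ℝ) < 2 * r * lr := by positivity
  set φ := Real.sqrt (2*r*lr) with hφdef
  have hφsq : φ * φ = 2 * r * lr := Real.mul_self_sqrt h2rlr.le
  have hφ0 : 0 < φ := Real.sqrt_pos.mpr h2rlr
  have hφlr : lr ≤ φ := by simpa using hev1
  have hφsrlr : φ ≤ Real.sqrt r * lr := by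
    rw [hφdef]
    calc Real.sqrt (2*r*lr) ≤ Real.sqrt (r*lr^2) := Real.sqrt_le_sqrt (by nlinarith)
      _ = Real.sqrt r * lr := by rw [Real.sqrt_mul hr0.le, Real.sqrt_sq hlr0.le]
  have hsrφ : Real.sqrt r ≤ φ := by
    rw [hφdef]
    calc Real.sqrt r = Real.sqrt (r*1) := by rw [mul_one]
      _ ≤ Real.sqrt (2*r*lr) := Real.sqrt_le_sqrt (by nlinarith)
  clear_value φ
  set k := ⌊φ/lr⌋₊ with hkdef
  have hm1 : 1 ≤ φ/lr := by rw [le_div_iff₀ hlr0]; linarith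
  have hkle : (k:ℝ) ≤ φ/lr := Nat.floor_le (by positivity)
  have hklt : φ/lr < (k:ℝ)+1 := Nat.lt_floor_add_one _
  have hk1 : 1 ≤ k := Nat.le_floor (by exact_mod_cast hm1)
  clear_value k
  have hk0 : (0:ℝ) < k := by exact_mod_cast Nat.lt_of_lt_of_le Nat.zero_lt_one hk1
  have hk1' : (1:ℝ) ≤ (k:ℝ) := by exact_mod_cast hk1
  have hksqrt : (k:ℝ) ≤ Real.sqrt r := by
    calc (k:ℝ) ≤ φ/lr := hkle
      _ ≤ Real.sqrt r := by rw [div_le_iff₀ hlr0]; linarith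
  have hlogk : Real.log k ≤ lr/2 := by
    calc Real.log k ≤ Real.log (Real.sqrt r) := Real.log_le_log hk0 hksqrt
      _ = lr/2 := hlogsqrt
  have hklogk : (k:ℝ)*Real.log k ≤ φ/2 := by
    have hlogk0 : 0 ≤ Real.log k := Real.log_nonneg hk1'
    calc (k:ℝ)*Real.log k ≤ (φ/lr)*Real.log k := mul_le_mul_of_nonneg_right hkle hlogk0
      _ ≤ (φ/lr)*(lr/2) := mul_le_mul_of_nonneg_left hlogk (by positivity)
      _ = φ/2 := by field_simp
  have hrk : r/((k:ℝ)+1) ≤ φ/2 := by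
    have h1 : r/((k:ℝ)+1) ≤ r/(φ/lr) :=
      div_le_div_of_nonneg_left hr0.le (by positivity) hklt.le
    have h2 : r/(φ/lr) = φ/2 := by
      rw [div_div_eq_mul_div, div_eq_div_iff (ne_of_gt hφ0) (by norm_num : (2:ℝ) ≠ 0)]
      linarith [hφsq]
    linarith
  have hkabs : (k:ℝ)*|Real.log c| ≤ ε/2*φ := by
    have h1 : 2*|Real.log c|/ε ≤ lr := le_trans (le_max_right _ _) hlr2
    have h2 : |Real.log c| ≤ ε/2*lr := by
      have := (div_le_iff₀ hε).mp h1
      linarith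
    calc (k:ℝ)*|Real.log c| ≤ (φ/lr)*|Real.log c| :=
          mul_le_mul_of_nonneg_right hkle (abs_nonneg _)
      _ ≤ (φ/lr)*(ε/2*lr) := mul_le_mul_of_nonneg_left h2 (by positivity)
      _ = ε/2*φ := by field_simp
  have hcφ : c ≤ ε/2*φ := by
    have h1 : Real.sqrt ((2*c/ε)^2) ≤ Real.sqrt r :=
      Real.sqrt_le_sqrt (le_trans (le_max_right _ _) hr3)
    rw [Real.sqrt_sq_eq_abs] at h1
    have h2 : 2*c/ε ≤ Real.sqrt r := le_trans (le_abs_self _) h1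
    have h4 : 2*c/ε ≤ φ := by linarith
    have := (div_le_iff₀ hε).mp h4
    nlinarith
  have hsumm := aux_summable hc (show (0:ℝ) ≤ r by linarith)
  have hfk := Summable.le_tsum hsumm k (fun j _ => by positivity)
  have hSpos := aux_S_pos hc (show (0:ℝ) ≤ r by linarith)
  have hfkpos : (0:ℝ) < c ^ k / (Nat.factorial k) * Real.exp (-c)
      * Real.exp (-r / ((k:ℝ)+1)) := by
    have hfac0 : (0:ℝ) < (Nat.factorial k : ℝ) := by exact_mod_cast Nat.factorial_pos k
    positivity
  have hlogS := Real.log_le_log hfkpos hfk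
  rw [aux_term_eq hc r k, Real.log_exp] at hlogS
  have hfac := aux_log_fac_ub k
  have hlogc : -((k:ℝ)*|Real.log c|) ≤ (k:ℝ)*Real.log c := by
    have := mul_le_mul_of_nonneg_left (neg_abs_le (Real.log c)) (Nat.cast_nonneg k)
    linarith [this]
  linarith [hklogk, hrk, hkabs, hcφ, hfac, hlogc, hlogS]

end Statement16Main
set_option maxHeartbeats 1000000 in
/-- For `c > 0`,
`log (Σ_{k=0}^∞ (c^k/k!) e^{−c} e^{−r/(k+1)}) ∼ −√(2 r log r)` as `r → ∞`. -/
theorem statement16 (c : ℝ) (hc : 0 < c) :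
    Tendsto (fun r : ℝ =>
        Real.log (∑' k : ℕ, c ^ k / (Nat.factorial k) * Real.exp (-c)
            * Real.exp (-r / ((k : ℝ) + 1)))
          / Real.sqrt (2 * r * Real.log r)) atTop (𝓝 (-1)) := by
  rw [Metric.tendsto_nhds]
  intro ε hε
  set ε0 := min ε 1 / 2 with hε0def
  have hε00 : 0 < ε0 := half_pos (lt_min hε one_pos)
  have hε01 : ε0 ≤ 1 := by
    have : min ε 1 ≤ 1 := min_le_right _ _
    simp only [hε0def]
    linarith
  have hε0ε : ε0 < ε := by
    have h1 : min ε 1 ≤ ε := min_le_left _ _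
    have h2 : 0 < min ε 1 := lt_min hε one_pos
    simp only [hε0def]
    linarith
  clear_value ε0
  filter_upwards [aux_lower hc hε00 hε01, aux_upper hc hε00 hε01,
    eventually_ge_atTop (3:ℝ)] with r hlow hup hr3
  have hr0 : (0:ℝ) < r := by linarith
  have hlr : 1 ≤ Real.log r := by
    rw [Real.le_log_iff_exp_le hr0]
    linarith [Real.exp_one_lt_d9]
  set φ := Real.sqrt (2*r*Real.log r) with hφdef
  set S := Real.log (∑' k : ℕ, c ^ k / (Nat.factorial k) * Real.exp (-c)
    * Real.exp (-r / ((k:ℝ)+1))) with hSdef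
  have hφ0 : 0 < φ := Real.sqrt_pos.mpr (by nlinarith)
  clear_value φ S
  have h1 : S / φ ≤ -(1-ε0) := by
    rw [div_le_iff₀ hφ0]
    nlinarith [hup]
  have h2 : -(1+ε0) ≤ S / φ := by
    rw [le_div_iff₀ hφ0]
    nlinarith [hlow]
  rw [Real.dist_eq]
  have h3 : |S/φ - (-1)| ≤ ε0 := abs_le.mpr ⟨by linarith, by linarith⟩
  linarith

end JumpCoding
end
end

section
/- There exist absolute constants c* > 0 and κ > 0 such that for every k ≥ 1, every random variable Y in [0,1]^k with Y_1 ≤ Y_2 ≤ … ≤ Y_k almost surely, every s > 0, and every r ≥ c* k: D^{(q)}(r | Y, ‖·‖_∞, s) ≤ (κ/k) e^{−r/k}. -/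
open MeasureTheory Filter
open scoped ENNReal NNReal Topology Classical

noncomputable section

namespace JumpCoding

universe u v w

lemma card_monotone_le (k m : ℕ) :
    ((Finset.univ : Finset (Fin k → Fin (m + 1))).filter (fun f => Monotone f)).card
      ≤ (m + k).choose k := by
  have h := Finset.card_le_card_of_injOn
    (s := (Finset.univ : Finset (Fin k → Fin (m + 1))).filter (fun f => Monotone f))
    (t := (Finset.range (m + k)).powersetCard k)
    (fun f => Finset.image (fun i : Fin k => (f i : ℕ) + (i : ℕ)) Finset.univ)
    ?_ ?_
  · simpa [Finset.card_powersetCard] using h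
  · intro f hf
    rw [Finset.mem_coe, Finset.mem_filter] at hf
    have hmono : StrictMono (fun i : Fin k => (f i : ℕ) + (i : ℕ)) := by
      intro i j hij
      show (f i : ℕ) + (i : ℕ) < (f j : ℕ) + (j : ℕ)
      have h1 : (f i : ℕ) ≤ (f j : ℕ) := hf.2 hij.le
      have h2 : (i : ℕ) < (j : ℕ) := hij
      omega
    rw [Finset.mem_coe, Finset.mem_powersetCard]
    constructor
    · intro x hx
      simp only [Finset.mem_image, Finset.mem_univ, true_and] at hx
      obtain ⟨i, rfl⟩ := hx
      have h1 : (f i : ℕ) < m + 1 := (f i).2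
      have h2 : (i : ℕ) < k := i.2
      simp only [Finset.mem_range]
      omega
    · rw [Finset.card_image_of_injective _ hmono.injective]
      simp
  · intro f₁ hf₁ f₂ hf₂ heq
    simp only [Finset.coe_filter, Set.mem_setOf_eq] at hf₁ hf₂
    replace heq : Finset.image (fun i : Fin k => (f₁ i : ℕ) + (i : ℕ)) Finset.univ
        = Finset.image (fun i : Fin k => (f₂ i : ℕ) + (i : ℕ)) Finset.univ := heq
    have hmono₁ : StrictMono (fun i : Fin k => (f₁ i : ℕ) + (i : ℕ)) := by
      intro i j hij
      show (f₁ i : ℕ) + (i : ℕ) < (f₁ j : ℕ) + (j : ℕ)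
      have h1 : (f₁ i : ℕ) ≤ (f₁ j : ℕ) := hf₁.2 hij.le
      have h2 : (i : ℕ) < (j : ℕ) := hij
      omega
    have hmono₂ : StrictMono (fun i : Fin k => (f₂ i : ℕ) + (i : ℕ)) := by
      intro i j hij
      show (f₂ i : ℕ) + (i : ℕ) < (f₂ j : ℕ) + (j : ℕ)
      have h1 : (f₂ i : ℕ) ≤ (f₂ j : ℕ) := hf₂.2 hij.le
      have h2 : (i : ℕ) < (j : ℕ) := hij
      omega
    set s : Finset ℕ := Finset.image (fun i : Fin k => (f₁ i : ℕ) + (i : ℕ)) Finset.univ with hs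
    have hcard : s.card = k := by
      rw [hs, Finset.card_image_of_injective _ hmono₁.injective]; simp
    have hmem₁ : ∀ x : Fin k, (f₁ x : ℕ) + (x : ℕ) ∈ s := by
      intro x; rw [hs]; exact Finset.mem_image_of_mem _ (Finset.mem_univ x)
    have hmem₂ : ∀ x : Fin k, (f₂ x : ℕ) + (x : ℕ) ∈ s := by
      intro x; rw [heq]; exact Finset.mem_image_of_mem _ (Finset.mem_univ x)
    have e₁ := Finset.orderEmbOfFin_unique hcard hmem₁ hmono₁
    have e₂ := Finset.orderEmbOfFin_unique hcard hmem₂ hmono₂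
    funext i
    have : (f₁ i : ℕ) + (i : ℕ) = (f₂ i : ℕ) + (i : ℕ) := by
      rw [show (f₁ i : ℕ) + (i : ℕ) = (fun j : Fin k => (f₁ j : ℕ) + (j : ℕ)) i from rfl, e₁,
        show (f₂ i : ℕ) + (i : ℕ) = (fun j : Fin k => (f₂ j : ℕ) + (j : ℕ)) i from rfl, e₂]
    exact Fin.ext (by omega)


lemma log_choose_le {k n : ℕ} (hk : 1 ≤ k) (hkn : k ≤ n) :
    Real.log (n.choose k) ≤ k * (Real.log n - Real.log k + 1) := by
  have hk0 : (0:ℝ) < k := by exact_mod_cast hk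
  have hn0 : (0:ℝ) < n := by exact_mod_cast hk.trans hkn
  have hfac : (0:ℝ) < (k.factorial : ℝ) := by exact_mod_cast k.factorial_pos
  have hchoose : (0:ℝ) < (n.choose k : ℝ) := by exact_mod_cast Nat.choose_pos hkn
  have h1 : Real.log (n.choose k) ≤ Real.log ((n:ℝ)^k / k.factorial) := by
    apply Real.log_le_log hchoose (Nat.choose_le_pow_div k n)
  rw [Real.log_div (by positivity) (ne_of_gt hfac), Real.log_pow] at h1
  have h2 : (k:ℝ)^k / k.factorial ≤ Real.exp k :=
    Real.pow_div_factorial_le_exp (x := (k:ℝ)) (Nat.cast_nonneg k) k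
  have h3 : (k:ℝ) * Real.log k - k ≤ Real.log (k.factorial) := by
    have h4 := Real.log_le_log (by positivity) ((div_le_iff₀ hfac).1 h2)
    rw [Real.log_pow, Real.log_mul (Real.exp_ne_zero _) (ne_of_gt hfac), Real.log_exp] at h4
    push_cast at h4 ⊢
    linarith
  push_cast at h1
  linarith


/-- There are absolute constants `c* > 0` and `κ > 0` such
that for every `k ≥ 1`, every random variable `Y` in `[0,1]^k` with a.s.
nondecreasing coordinates, every `s > 0` and every `r ≥ c* k`:
`D^{(q)}(r | Y, ‖·‖_∞, s) ≤ (κ/k) e^{−r/k}`. -/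
theorem statement19 :
    ∃ cstar κ : ℝ, 0 < cstar ∧ 0 < κ ∧
      ∀ (Ω : Type u) [MeasurableSpace Ω] (P : Measure Ω) [IsProbabilityMeasure P]
        (k : ℕ), 1 ≤ k →
        ∀ Y : Ω → (Fin k → ℝ), Measurable Y →
          (∀ ω i, Y ω i ∈ Set.Icc (0 : ℝ) 1) →
          (∀ᵐ ω ∂P, Monotone (Y ω)) →
          ∀ s r : ℝ, 0 < s → cstar * k ≤ r →
            quantError P Y (fun x y => ‖x - y‖) s r
              ≤ κ / k * Real.exp (-r / k) := by
  unfold quantError quantErrorIn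
  refine ⟨3, Real.exp 2, by norm_num, Real.exp_pos 2, ?_⟩
  intro Ω _ P _ k hk Y hY hYmem hYmono s r hs hr
  have hk1 : (1:ℝ) ≤ (k:ℝ) := by exact_mod_cast hk
  have hk0 : (0:ℝ) < (k:ℝ) := by linarith
  have hL : (3:ℝ) ≤ r / k := by rw [le_div_iff₀ hk0]; linarith
  set L := r / k with hLdef
  set m : ℕ := ⌈(k:ℝ) * Real.exp L / Real.exp 2⌉₊ with hmdef
  have hmarg : (0:ℝ) < (k:ℝ) * Real.exp L / Real.exp 2 := by positivity
  have hm1 : (k:ℝ) * Real.exp L / Real.exp 2 ≤ (m:ℝ) := Nat.le_ceil _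
  have hm2 : (m:ℝ) ≤ (k:ℝ) * Real.exp L / Real.exp 2 + 1 := (Nat.ceil_lt_add_one hmarg.le).le
  have hm0 : (0:ℝ) < (m:ℝ) := lt_of_lt_of_le hmarg hm1
  set C : Finset (Fin k → ℝ) :=
    ((Finset.univ : Finset (Fin k → Fin (m+1))).filter (fun f => Monotone f)).image
      (fun f i => ((f i : ℕ) : ℝ) / m) with hCdef
  have hCne : C.Nonempty := by
    refine ⟨_, Finset.mem_image_of_mem _ (Finset.mem_filter.2 ⟨Finset.mem_univ
      (fun _ : Fin k => (0 : Fin (m+1))), monotone_const⟩)⟩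
  -- log card bound
  have hcard : C.card ≤ (m + k).choose k :=
    le_trans Finset.card_image_le (card_monotone_le k m)
  have hlog : Real.log C.card ≤ r := by
    have h0 : 0 < C.card := hCne.card_pos
    have hA : Real.log C.card ≤ Real.log ((m+k).choose k) :=
      Real.log_le_log (by exact_mod_cast h0) (by exact_mod_cast hcard)
    have hB : Real.log (((m+k : ℕ)).choose k : ℝ) ≤ (k:ℝ) * (Real.log ((m+k : ℕ) : ℝ) - Real.log k + 1) :=
      log_choose_le hk (Nat.le_add_left k m)
    have e2 : (2:ℝ) ≤ Real.exp (L - 2) := by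
      have := Real.add_one_le_exp (L - 2)
      linarith
    have hmk : ((m+k : ℕ):ℝ) ≤ 2 * k * Real.exp (L - 2) := by
      push_cast
      have heq : (k:ℝ) * Real.exp L / Real.exp 2 = k * Real.exp (L - 2) := by
        rw [Real.exp_sub]; ring
      rw [heq] at hm2
      nlinarith [Real.exp_pos (L-2)]
    have hmk0 : (0:ℝ) < ((m+k : ℕ):ℝ) := by push_cast; linarith
    have hC2 : Real.log ((m+k:ℕ):ℝ) ≤ Real.log 2 + Real.log k + (L - 2) := by
      have := Real.log_le_log hmk0 hmk
      rw [Real.log_mul (by positivity) (Real.exp_ne_zero _), Real.log_mul (by norm_num) hk0.ne',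
        Real.log_exp] at this
      linarith
    have hlog2 : Real.log 2 ≤ 1 := by
      rw [show (1:ℝ) = Real.log (Real.exp 1) by rw [Real.log_exp]]
      exact Real.log_le_log (by norm_num) (by linarith [Real.add_one_le_exp (1:ℝ)])
    have hkL : (k:ℝ) * L = r := by
      rw [hLdef]; field_simp
    have hmain : Real.log (C.card : ℝ) ≤ (k:ℝ) * (Real.log ((m+k:ℕ):ℝ) - Real.log k + 1) :=
      hA.trans hB
    have hstep1 : (k:ℝ) * (Real.log ((m+k:ℕ):ℝ) - Real.log k + 1)
        ≤ (k:ℝ) * (Real.log 2 + L - 1) :=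
      mul_le_mul_of_nonneg_left (by linarith) hk0.le
    have hstep2 : (k:ℝ) * (Real.log 2 + L - 1) ≤ (k:ℝ) * L :=
      mul_le_mul_of_nonneg_left (by linarith) hk0.le
    linarith
  -- distortion bound
  have hinf_nonneg : ∀ ω, 0 ≤ (C.inf' hCne fun a => ‖Y ω - a‖) := fun ω =>
    Finset.le_inf' hCne _ (fun a _ => norm_nonneg _)
  have hkey : ∀ᵐ ω ∂P, (C.inf' hCne fun a => ‖Y ω - a‖) ≤ 1/(m:ℝ) := by
    filter_upwards [hYmono] with ω hmono
    have hfval : ∀ i : Fin k, ⌊(m:ℝ) * Y ω i⌋₊ < m + 1 := by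
      intro i
      have h1 : (m:ℝ) * Y ω i ≤ (m:ℝ) := by nlinarith [(hYmem ω i).2]
      have h2 : ⌊(m:ℝ) * Y ω i⌋₊ ≤ ⌊(m:ℝ)⌋₊ := Nat.floor_mono h1
      have h3 : ⌊(m:ℝ)⌋₊ = m := Nat.floor_natCast m
      omega
    set f : Fin k → Fin (m+1) := fun i => ⟨⌊(m:ℝ) * Y ω i⌋₊, hfval i⟩ with hfdef
    have hfmono : Monotone f := by
      intro i j hij
      show (⌊(m:ℝ) * Y ω i⌋₊ : ℕ) ≤ ⌊(m:ℝ) * Y ω j⌋₊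
      exact Nat.floor_mono (mul_le_mul_of_nonneg_left (hmono hij) hm0.le)
    have ha : (fun i => ((f i : ℕ) : ℝ) / m) ∈ C :=
      Finset.mem_image_of_mem _ (Finset.mem_filter.2 ⟨Finset.mem_univ _, hfmono⟩)
    refine le_trans (Finset.inf'_le _ ha) ?_
    rw [pi_norm_le_iff_of_nonneg (by positivity)]
    intro i
    have h0 : 0 ≤ (m:ℝ) * Y ω i := by nlinarith [(hYmem ω i).1]
    have hfl : ((⌊(m:ℝ) * Y ω i⌋₊ : ℕ):ℝ) ≤ (m:ℝ) * Y ω i := Nat.floor_le h0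
    have hfl2 : (m:ℝ) * Y ω i < (⌊(m:ℝ) * Y ω i⌋₊ : ℝ) + 1 := Nat.lt_floor_add_one _
    have hcoord : (Y ω - fun i => ((f i : ℕ) : ℝ) / m) i
        = Y ω i - (⌊(m:ℝ) * Y ω i⌋₊ : ℝ) / m := rfl
    rw [hcoord, Real.norm_eq_abs, abs_le]
    constructor
    · have : (⌊(m:ℝ) * Y ω i⌋₊ : ℝ) / m ≤ Y ω i := by
        rw [div_le_iff₀ hm0]; nlinarith
      have h1m : (0:ℝ) ≤ 1/(m:ℝ) := by positivity
      linarith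
    · rw [sub_le_iff_le_add, ← add_div, le_div_iff₀ hm0]
      nlinarith
  have hint : ∫ ω, (C.inf' hCne fun a => ‖Y ω - a‖) ^ s ∂P ≤ (1/(m:ℝ)) ^ s := by
    have h1 : ∫ ω, (C.inf' hCne fun a => ‖Y ω - a‖) ^ s ∂P ≤ ∫ _ω, (1/(m:ℝ)) ^ s ∂P := by
      refine integral_mono_of_nonneg ?_ (integrable_const _) ?_
      · exact Eventually.of_forall fun ω => Real.rpow_nonneg (hinf_nonneg ω) s
      · filter_upwards [hkey] with ω hω
        exact Real.rpow_le_rpow (hinf_nonneg ω) hω hs.le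
    simpa using h1
  have he0 : (∫ ω, (C.inf' hCne fun a => ‖Y ω - a‖) ^ s ∂P) ^ (1/s) ≤ 1/(m:ℝ) := by
    have h1 : (∫ ω, (C.inf' hCne fun a => ‖Y ω - a‖) ^ s ∂P) ^ (1/s) ≤ ((1/(m:ℝ))^s)^(1/s) :=
      Real.rpow_le_rpow (integral_nonneg fun ω => Real.rpow_nonneg (hinf_nonneg ω) s) hint
        (by positivity)
    rwa [← Real.rpow_mul (by positivity), mul_one_div_cancel hs.ne', Real.rpow_one] at h1
  have hfinal : 1/(m:ℝ) ≤ Real.exp 2 / k * Real.exp (-r / k) := by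
    rw [neg_div, ← hLdef, Real.exp_neg]
    have h1 : (k:ℝ) * Real.exp L ≤ Real.exp 2 * m := by
      have := (div_le_iff₀ (Real.exp_pos 2)).1 hm1
      linarith
    have h2 : Real.exp 2 / (k:ℝ) * (Real.exp L)⁻¹ = Real.exp 2 / ((k:ℝ) * Real.exp L) := by
      field_simp
    rw [h2, div_le_div_iff₀ hm0 (by positivity), one_mul]
    linarith
  refine le_trans (csInf_le ?_ ?_) (le_trans he0 hfinal)
  · refine ⟨0, fun e he => ?_⟩
    obtain ⟨C', hC', -, -, rfl⟩ := he
    exact Real.rpow_nonneg (integral_nonneg fun ω => Real.rpow_nonneg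
      (Finset.le_inf' hC' _ (fun a _ => norm_nonneg _)) s) _
  · exact ⟨C, hCne, by simp, hlog, rfl⟩


end JumpCoding
end
end
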